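/- Let L, b > 0 and let m ≥ 1 be an integer. Define, for β ∈ ℝ with sin(mβ) ≠ 0, E(β) = (cos²(mβ)·sin³β/(64π²·sin⁴(mβ))) · (1/(L²·cos β) − 1/((L + b·sin β)²·cos((m−1)β)·cos(mβ))). Then E(β) tends to −b/(32π²·L³·m⁴) as β tends to π (the limit taken along β ≠ π). -/

import Mathlib

open Real Filter Topology

set_option maxHeartbeats 1600000 in
/-- The closed `2m`-bounce contribution to the optical-approximation Casimir
energy between a finite plate of length `b` at minimum separation `L` above an
infinite plane tends to `−b/(32π²L³m⁴)` in the parallel-plate limit `β → π`. -/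
theorem even_bounce_energy_limit (L b : ℝ) (hL : 0 < L) (hb : 0 < b)
    (m : ℕ) (hm : 1 ≤ m) :
    Filter.Tendsto
      (fun β : ℝ =>
        (Real.cos ((m : ℝ) * β) ^ 2 * Real.sin β ^ 3 /
            (64 * π ^ 2 * Real.sin ((m : ℝ) * β) ^ 4)) *
          (1 / (L ^ 2 * Real.cos β) -
            1 / ((L + b * Real.sin β) ^ 2 * Real.cos (((m : ℝ) - 1) * β) *
              Real.cos ((m : ℝ) * β))))
      (𝓝[≠] π) (𝓝 (-b / (32 * π ^ 2 * L ^ 3 * (m : ℝ) ^ 4))) := by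
  obtain ⟨k, rfl⟩ : ∃ k, m = k + 1 := ⟨m - 1, by omega⟩
  have hπ := Real.pi_pos
  set c : ℝ := Real.cos ((k : ℝ) * π) with hcdef
  have hsk : Real.sin ((k : ℝ) * π) = 0 := Real.sin_nat_mul_pi k
  have hc2 : c ^ 2 = 1 := by
    have h := Real.sin_sq_add_cos_sq ((k : ℝ) * π)
    rw [hsk] at h; nlinarith [h]
  have hcne : c ≠ 0 := by intro h; rw [h] at hc2; norm_num at hc2
  set M : ℝ := ((k + 1 : ℕ) : ℝ) with hMdef
  have hMval : M = (k : ℝ) + 1 := by rw [hMdef]; push_cast; ring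
  have hMpos : 0 < M := by rw [hMval]; positivity
  have hm1 : M - 1 = (k : ℝ) := by rw [hMval]; ring
  have hcm : Real.cos (M * π) = -c := by
    rw [hMval, show ((k:ℝ)+1)*π = (k:ℝ)*π + π by ring, Real.cos_add_pi]
  have hsm : Real.sin (M * π) = 0 := Real.sin_nat_mul_pi (k + 1)
  have hsm1 : Real.sin ((M - 1) * π) = 0 := by rw [hm1]; exact hsk
  have hcm1 : Real.cos ((M - 1) * π) = c := by rw [hm1]
  -- the bracket function
  set F : ℝ → ℝ := fun β =>
    1 / (L ^ 2 * Real.cos β) -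
      1 / ((L + b * Real.sin β) ^ 2 * Real.cos ((M - 1) * β) * Real.cos (M * β))
    with hFdef
  -- its value at π is 0
  have hFπ : F π = 0 := by
    rw [hFdef]
    simp only [Real.sin_pi, Real.cos_pi, hcm, hcm1]
    field_simp
    nlinarith [hc2]
  -- derivative of F at π is 2b/L³
  have hFd : HasDerivAt F (2 * b / L ^ 3) π := by
    have p1 := ((hasDerivAt_const π L).add ((Real.hasDerivAt_sin π).const_mul b)).pow 2
    have p2 := ((hasDerivAt_id π).const_mul (M - 1)).cos
    have p3 := ((hasDerivAt_id π).const_mul M).cos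
    have hu := (p1.mul p2).mul p3
    have hune : ((L + b * Real.sin π) ^ 2 * Real.cos ((M - 1) * π)) * Real.cos (M * π) ≠ 0 := by
      rw [Real.sin_pi, hcm, hcm1]
      simp only [mul_zero, add_zero]
      intro h
      nlinarith [hc2, sq_nonneg L]
    have ht2 := (hasDerivAt_const π (1:ℝ)).div hu (by simpa using hune)
    have hc1 : HasDerivAt (fun β : ℝ => L ^ 2 * Real.cos β) (L ^ 2 * (-Real.sin π)) π :=
      (Real.hasDerivAt_cos π).const_mul (L ^ 2)
    have hc1ne : L ^ 2 * Real.cos π ≠ 0 := by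
      rw [Real.cos_pi]; intro h; nlinarith [sq_nonneg L, hL]
    have ht1 := (hasDerivAt_const π (1:ℝ)).div hc1 (by simpa using hc1ne)
    have hFd0 := ht1.sub ht2
    rw [hFdef]
    refine HasDerivAt.congr_deriv hFd0 (Eq.symm ?_)
    simp only [id_eq, Real.sin_pi, Real.cos_pi, hcm, hcm1, hsm, hsm1, mul_one, mul_zero,
      add_zero, zero_mul, neg_zero, zero_add, zero_sub, one_mul, neg_mul, sub_zero, pow_one]
    norm_num
    simp only [hcm, hcm1]
    field_simp
    linear_combination hc2
  -- slope limits
  have slope_eq : ∀ (f : ℝ → ℝ), f π = 0 → slope f π = fun β => f β / (β - π) := by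
    intro f hf
    funext β
    rw [slope_def_field, hf, sub_zero]
  have tS : Tendsto (fun β : ℝ => Real.sin β / (β - π)) (𝓝[≠] π) (𝓝 (-1)) := by
    have h := hasDerivAt_iff_tendsto_slope.mp (Real.hasDerivAt_sin π)
    rw [slope_eq Real.sin Real.sin_pi] at h
    simpa [Real.cos_pi] using h
  have tG : Tendsto (fun β : ℝ => Real.sin (M * β) / (β - π)) (𝓝[≠] π) (𝓝 (-c * M)) := by
    have hd : HasDerivAt (fun β : ℝ => Real.sin (M * β)) (-c * M) π := by
      have := ((hasDerivAt_id π).const_mul M).sin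
      simpa [hcm] using this
    have h := hasDerivAt_iff_tendsto_slope.mp hd
    rwa [slope_eq _ (by simpa using hsm)] at h
  have tF : Tendsto (fun β : ℝ => F β / (β - π)) (𝓝[≠] π) (𝓝 (2 * b / L ^ 3)) := by
    have h := hasDerivAt_iff_tendsto_slope.mp hFd
    rwa [slope_eq F hFπ] at h
  have hGne : (-c * M : ℝ) ≠ 0 := by
    intro h
    rcases mul_eq_zero.mp h with h | h
    · exact hcne (by linarith [neg_eq_zero.mp h])
    · exact absurd h (ne_of_gt hMpos)
  have tR := (tS.div tG hGne).pow 4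
  have tB := tF.div tS (by norm_num)
  have tC : Tendsto (fun β : ℝ => Real.cos (M * β) ^ 2 / (64 * π ^ 2)) (𝓝[≠] π)
      (𝓝 (Real.cos (M * π) ^ 2 / (64 * π ^ 2))) := by
    apply Tendsto.mono_left _ nhdsWithin_le_nhds
    exact Continuous.tendsto
      (((Real.continuous_cos.comp (continuous_const.mul continuous_id)).pow 2).div_const _) π
  have total := (tC.mul tR).mul tB
  -- identify the limit value
  have hval : -b / (32 * π ^ 2 * L ^ 3 * M ^ 4) =
      Real.cos (M * π) ^ 2 / (64 * π ^ 2) * (-1 / (-c * M)) ^ 4 * (2 * b / L ^ 3 / -1) := by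
    rw [hcm]
    have hMne : M ≠ 0 := ne_of_gt hMpos
    field_simp
    linear_combination (-64) * hc2
  rw [hval]
  -- eventual equality of the two functions
  apply total.congr'
  have hIoo : Set.Ioo (π - π / M) (π + π / M) ∈ 𝓝[≠] π := by
    have h0 : 0 < π / M := div_pos hπ hMpos
    exact nhdsWithin_le_nhds (Ioo_mem_nhds (by linarith) (by linarith))
  filter_upwards [hIoo, self_mem_nhdsWithin] with β hβI hβne
  have hβne' : β ≠ π := hβne
  have hd : β - π ≠ 0 := sub_ne_zero.mpr hβne'
  have h1M : (1:ℝ) ≤ M := by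
    rw [hMval]
    have := Nat.cast_nonneg (α := ℝ) k
    linarith
  have hMle : π / M ≤ π :=
    (div_le_div_of_nonneg_left hπ.le one_pos h1M).trans_eq (div_one π)
  have hsβ : Real.sin β ≠ 0 := by
    intro h
    obtain ⟨n, hn⟩ := Real.sin_eq_zero_iff.mp h
    have h1 : 0 < β := by
      have := hβI.1; linarith
    have h2 : β < 2 * π := by
      have := hβI.2; linarith
    have hn1 : n = 1 := by
      have hn0 : 0 < (n : ℝ) * π := by rw [hn]; exact h1
      have hn2 : (n : ℝ) * π < 2 * π := by rw [hn]; exact h2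
      have : 0 < (n : ℝ) := by
        by_contra hc'
        push_neg at hc'
        nlinarith
      have : (n : ℝ) < 2 := by nlinarith
      have h0 : 0 < n := by exact_mod_cast ‹0 < (n:ℝ)›
      have h2' : n < 2 := by exact_mod_cast ‹(n:ℝ) < 2›
      omega
    rw [hn1] at hn
    simp at hn
    exact hβne' hn.symm
  have hsmβ : Real.sin (M * β) ≠ 0 := by
    intro h
    obtain ⟨n, hn⟩ := Real.sin_eq_zero_iff.mp h
    have h1 : M * π - π < M * β := by
      have := hβI.1
      have : M * (π - π / M) < M * β := by
        apply (mul_lt_mul_iff_right₀ hMpos).mpr this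
      calc M * π - π = M * (π - π / M) := by field_simp
        _ < M * β := this
    have h2 : M * β < M * π + π := by
      have := hβI.2
      have hh : M * β < M * (π + π / M) := (mul_lt_mul_iff_right₀ hMpos).mpr this
      calc M * β < M * (π + π / M) := hh
        _ = M * π + π := by field_simp
    rw [← hn] at h1 h2
    have hkn : (n : ℝ) = M := by
      rw [hMval] at h1 h2 ⊢
      have hl : (k : ℝ) < n := by nlinarith
      have hr : (n : ℝ) < (k : ℝ) + 2 := by nlinarith
      have hl' : (k : ℤ) < n := by exact_mod_cast hl
      have hr' : n < (k : ℤ) + 2 := by exact_mod_cast hr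
      have : n = (k : ℤ) + 1 := by omega
      rw [this]; push_cast; ring
    rw [hkn] at hn
    have : β = π := by
      have := mul_left_cancel₀ (ne_of_gt hMpos) hn
      linarith [this]
    exact hβne' this
  -- now the algebraic identity
  show _ = _
  simp only [Pi.div_apply, hFdef]
  field_simp
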